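/- Let T be a positive integer and let X_1, …, X_T be i.i.d. real-valued random variables with common cumulative distribution function F. Let V : ℝ → ℝ be Borel measurable, nonnegative, monotone nondecreasing, and concave. Let S_1 ∈ (0, T] be a real number and let l ∈ ℝ satisfy F(l) = 1 − S_1/T. Assume max_{1 ≤ t ≤ T} X_t is integrable and V(max_{1 ≤ t ≤ T} X_t) is integrable. Then (1 − e^{−S_1})·V(l) ≤ E[V(max_{1 ≤ t ≤ T} X_t)] ≤ V(E[max_{1 ≤ t ≤ T} X_t]). -/

import Mathlib

open MeasureTheory ProbabilityTheory Real

/-- For `T` i.i.d. real random variables with common cdf `F`, a Borel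
measurable, nonnegative, nondecreasing, concave `V : ℝ → ℝ`, `S₁ ∈ (0, T]`, `l` with
`F l = 1 - S₁/T`, and integrability of `max_t X_t` and `V (max_t X_t)`:
`(1 - e^{-S₁}) · V l ≤ E[V (max_t X_t)] ≤ V (E[max_t X_t])`. -/
theorem stmt1
    {Ω : Type*} [MeasurableSpace Ω] (P : Measure Ω) [IsProbabilityMeasure P]
    (T : ℕ) (hT : 0 < T)
    (X : Fin T → Ω → ℝ)
    (hmeas : ∀ t, Measurable (X t))
    (hindep : iIndepFun X P)
    (hident : ∀ t, Measure.map (X t) P = Measure.map (X ⟨0, hT⟩) P)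
    (F : ℝ → ℝ) (hF : ∀ x, F x = (P {ω | X ⟨0, hT⟩ ω ≤ x}).toReal)
    (V : ℝ → ℝ) (hVmeas : Measurable V) (hVnonneg : ∀ x, 0 ≤ V x) (hVmono : Monotone V)
    (hVconc : ConcaveOn ℝ Set.univ V)
    (S₁ : ℝ) (hS₁pos : 0 < S₁) (hS₁le : S₁ ≤ T)
    (l : ℝ) (hl : F l = 1 - S₁ / T)
    (hintmax : Integrable
      (fun ω => Finset.univ.sup' ⟨⟨0, hT⟩, Finset.mem_univ _⟩ (fun t => X t ω)) P)
    (hintV : Integrable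
      (fun ω => V (Finset.univ.sup' ⟨⟨0, hT⟩, Finset.mem_univ _⟩ (fun t => X t ω))) P) :
    (1 - Real.exp (-S₁)) * V l
      ≤ ∫ ω, V (Finset.univ.sup' ⟨⟨0, hT⟩, Finset.mem_univ _⟩ (fun t => X t ω)) ∂P
    ∧ ∫ ω, V (Finset.univ.sup' ⟨⟨0, hT⟩, Finset.mem_univ _⟩ (fun t => X t ω)) ∂P
      ≤ V (∫ ω, Finset.univ.sup' ⟨⟨0, hT⟩, Finset.mem_univ _⟩ (fun t => X t ω) ∂P) := by
  have hTR : (0 : ℝ) < (T : ℝ) := by exact_mod_cast hT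
  set ne : Finset.Nonempty (Finset.univ : Finset (Fin T)) :=
    ⟨⟨0, hT⟩, Finset.mem_univ _⟩ with hne
  set M : Ω → ℝ := fun ω => Finset.univ.sup' ne (fun t => X t ω) with hM
  have hMmeas : Measurable M := by
    have : Measurable (Finset.univ.sup' ne X) :=
      Finset.measurable_sup' ne (fun n _ => hmeas n)
    convert this using 1
    ext ω
    simp [hM, Finset.sup'_apply]
  -- measure of {M ≤ l}
  have hle_set : {ω | M ω ≤ l} = ⋂ t, X t ⁻¹' Set.Iic l := by
    ext ω; simp [hM, Finset.sup'_le_iff]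
  have hprod : P {ω | M ω ≤ l} = (P {ω | X ⟨0, hT⟩ ω ≤ l}) ^ T := by
    rw [hle_set, hindep.meas_iInter (fun i => ⟨Set.Iic l, measurableSet_Iic, rfl⟩)]
    have heach : ∀ t : Fin T, P (X t ⁻¹' Set.Iic l) = P {ω | X ⟨0, hT⟩ ω ≤ l} := by
      intro t
      have h1 : P (X t ⁻¹' Set.Iic l) = (Measure.map (X t) P) (Set.Iic l) :=
        (Measure.map_apply (hmeas t) measurableSet_Iic).symm
      have h2 : P (X ⟨0, hT⟩ ⁻¹' Set.Iic l) = (Measure.map (X ⟨0, hT⟩) P) (Set.Iic l) :=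
        (Measure.map_apply (hmeas _) measurableSet_Iic).symm
      rw [h1, hident t, ← h2]
      rfl
    simp_rw [heach]
    simp
  have hμs_ne : P {ω | M ω ≤ l} ≠ ⊤ := measure_ne_top _ _
  have htoReal : (P {ω | M ω ≤ l}).toReal = (1 - S₁ / T) ^ T := by
    rw [hprod, ENNReal.toReal_pow, ← hF l, hl]
  -- bound on the measure of {l < M}
  have hexp : (1 - S₁ / T) ^ T ≤ Real.exp (-S₁) := by
    have h0 : (0:ℝ) ≤ 1 - S₁ / T := by
      rw [sub_nonneg, div_le_one hTR]; exact hS₁le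
    have h1 : 1 - S₁ / T ≤ Real.exp (-(S₁ / T)) := by
      have := Real.add_one_le_exp (-(S₁ / T)); linarith
    calc (1 - S₁ / T) ^ T ≤ (Real.exp (-(S₁ / T))) ^ T := pow_le_pow_left₀ h0 h1 T
      _ = Real.exp (-S₁) := by
          rw [← Real.exp_nat_mul]
          congr 1
          field_simp
  have hmeasset : MeasurableSet {ω | l < M ω} := measurableSet_lt measurable_const hMmeas
  have hcompl : {ω | l < M ω} = {ω | M ω ≤ l}ᶜ := by ext ω; simp [not_le]
  have hPA : (1 : ℝ) - Real.exp (-S₁) ≤ (P {ω | l < M ω}).toReal := by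
    have hMle : MeasurableSet {ω | M ω ≤ l} := measurableSet_le hMmeas measurable_const
    rw [hcompl, measure_compl hMle (measure_ne_top _ _), measure_univ,
      ENNReal.toReal_sub_of_le prob_le_one (by simp), ENNReal.toReal_one, htoReal]
    linarith
  constructor
  · -- lower bound
    have hVl : V l * (P {ω | l < M ω}).toReal ≤ ∫ ω in {ω | l < M ω}, V (M ω) ∂P := by
      refine setIntegral_ge_of_const_le_real hmeasset (measure_ne_top _ _) (fun ω hω => ?_) ?_
      · exact hVmono (le_of_lt hω)
      · exact hintV.integrableOn
    have hsub : ∫ ω in {ω | l < M ω}, V (M ω) ∂P ≤ ∫ ω, V (M ω) ∂P :=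
      setIntegral_le_integral hintV (Filter.Eventually.of_forall fun ω => hVnonneg _)
    calc (1 - Real.exp (-S₁)) * V l ≤ (P {ω | l < M ω}).toReal * V l :=
          mul_le_mul_of_nonneg_right hPA (hVnonneg l)
      _ = V l * (P {ω | l < M ω}).toReal := mul_comm _ _
      _ ≤ ∫ ω in {ω | l < M ω}, V (M ω) ∂P := hVl
      _ ≤ ∫ ω, V (M ω) ∂P := hsub
  · -- Jensen
    have hcont : ContinuousOn V Set.univ := hVconc.continuousOn isOpen_univ
    exact hVconc.le_map_integral hcont isClosed_univ
      (Filter.Eventually.of_forall fun ω => Set.mem_univ _) hintmax hintV
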